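/- Let (S,E,I,R) be a classical solution of the 1D SEIR reaction–diffusion system on [0,T]×[0,L] with λ > 0, and let N = S + E + I + R. Set D = max(0, max_{y∈[0,L]} N(0,y) − Λ/μ). Then for all (t,x) ∈ [0,T]×[0,L] one has N(t,x) ≤ Λ/μ + D·e^{−μt}; in other words the excess of the total population above the carrying capacity Λ/μ decays at least at the exponential rate μ. -/

import Mathlib

open Filter Topology Set


/-- At a maximum over `[l,a]` attained at the right endpoint `a`, a one-sided
derivative is nonnegative. -/
lemma seirAux_deriv_nonneg_right {f : ℝ → ℝ} {d l a : ℝ} (hl : l < a)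
    (hf : HasDerivWithinAt f d (Set.Icc l a) a)
    (hmax : ∀ y ∈ Set.Icc l a, f y ≤ f a) : 0 ≤ d := by
  have hT : Tendsto (slope f a) (𝓝[Set.Icc l a \ {a}] a) (𝓝 d) :=
    hasDerivWithinAt_iff_tendsto_slope.mp hf
  have hcl : a ∈ closure (Set.Ioo l a) := by
    rw [closure_Ioo hl.ne]; exact ⟨hl.le, le_rfl⟩
  have hne : (𝓝[Set.Ioo l a] a).NeBot := mem_closure_iff_nhdsWithin_neBot.mp hcl
  have hsub : Set.Ioo l a ⊆ Set.Icc l a \ {a} :=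
    fun y hy => ⟨⟨hy.1.le, hy.2.le⟩, ne_of_lt hy.2⟩
  have hT' : Tendsto (slope f a) (𝓝[Set.Ioo l a] a) (𝓝 d) :=
    hT.mono_left (nhdsWithin_mono _ hsub)
  refine ge_of_tendsto hT' ?_
  filter_upwards [self_mem_nhdsWithin] with y hy
  have h1 : f y - f a ≤ 0 := sub_nonpos.mpr (hmax y ⟨hy.1.le, hy.2.le⟩)
  have h2 : y - a < 0 := sub_neg.mpr hy.2
  rw [slope_def_field]
  exact div_nonneg_iff.mpr (Or.inr ⟨h1, h2.le⟩)

/-- At a maximum over `[a,r]` attained at the left endpoint `a`, a one-sided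
derivative is nonpositive. -/
lemma seirAux_deriv_nonpos_left {f : ℝ → ℝ} {d a r : ℝ} (hr : a < r)
    (hf : HasDerivWithinAt f d (Set.Icc a r) a)
    (hmax : ∀ y ∈ Set.Icc a r, f y ≤ f a) : d ≤ 0 := by
  have hT : Tendsto (slope f a) (𝓝[Set.Icc a r \ {a}] a) (𝓝 d) :=
    hasDerivWithinAt_iff_tendsto_slope.mp hf
  have hcl : a ∈ closure (Set.Ioo a r) := by
    rw [closure_Ioo hr.ne]; exact ⟨le_rfl, hr.le⟩
  have hne : (𝓝[Set.Ioo a r] a).NeBot := mem_closure_iff_nhdsWithin_neBot.mp hcl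
  have hsub : Set.Ioo a r ⊆ Set.Icc a r \ {a} :=
    fun y hy => ⟨⟨hy.1.le, hy.2.le⟩, ne_of_gt hy.1⟩
  have hT' : Tendsto (slope f a) (𝓝[Set.Ioo a r] a) (𝓝 d) :=
    hT.mono_left (nhdsWithin_mono _ hsub)
  refine le_of_tendsto hT' ?_
  filter_upwards [self_mem_nhdsWithin] with y hy
  have h1 : f y - f a ≤ 0 := sub_nonpos.mpr (hmax y ⟨hy.1.le, hy.2.le⟩)
  have h2 : 0 < y - a := sub_pos.mpr hy.1
  rw [slope_def_field]
  exact div_nonpos_of_nonpos_of_nonneg h1 h2.le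

/-- Second-order test: at an interior maximum (seen from the right interval `[x₀,b]`)
with vanishing first derivative, the second derivative is nonpositive. -/
lemma seirAux_second_deriv_nonpos {g g' : ℝ → ℝ} {x₀ b c : ℝ} (hxb : x₀ < b)
    (hg : ∀ y ∈ Set.Icc x₀ b, HasDerivWithinAt g (g' y) (Set.Icc x₀ b) y)
    (h0 : g' x₀ = 0) (hg'' : HasDerivAt g' c x₀)
    (hmax : ∀ y ∈ Set.Icc x₀ b, g y ≤ g x₀) : c ≤ 0 := by
  by_contra hc
  push_neg at hc
  have hT : Tendsto (slope g' x₀) (𝓝[>] x₀) (𝓝 c) :=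
    (hasDerivAt_iff_tendsto_slope.mp hg'').mono_left
      (nhdsWithin_mono _ (fun y hy => ne_of_gt hy))
  have hpos : ∀ᶠ y in 𝓝[>] x₀, 0 < slope g' x₀ y := hT.eventually (eventually_gt_nhds hc)
  obtain ⟨u, hu, hsub⟩ := mem_nhdsGT_iff_exists_Ioo_subset.mp hpos
  have hu' : x₀ < u := hu
  set b₁ := min u b with hb₁def
  have hb₁ : x₀ < b₁ := lt_min hu' hxb
  have hIccsub : Set.Icc x₀ b₁ ⊆ Set.Icc x₀ b := Set.Icc_subset_Icc le_rfl (min_le_right _ _)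
  have hmono : StrictMonoOn g (Set.Icc x₀ b₁) := by
    have hint : interior (Set.Icc x₀ b₁) = Set.Ioo x₀ b₁ := interior_Icc
    refine strictMonoOn_of_hasDerivWithinAt_pos (f' := g') (convex_Icc _ _)
      (fun y hy => ((hg y (hIccsub hy)).mono hIccsub).continuousWithinAt)
      (fun y hy => ?_) (fun y hy => ?_)
    · rw [hint] at hy ⊢
      exact ((hg y (hIccsub (Set.Ioo_subset_Icc_self hy))).mono
        (subset_trans Set.Ioo_subset_Icc_self hIccsub)).mono_of_mem_nhdsWithin
        (mem_nhdsWithin_of_mem_nhds (Ioo_mem_nhds hy.1 hy.2))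
    · rw [hint] at hy
      have hy' : y ∈ Set.Ioo x₀ u := ⟨hy.1, lt_of_lt_of_le hy.2 (min_le_left _ _)⟩
      have := hsub hy'
      have hslope : slope g' x₀ y = g' y / (y - x₀) := by
        rw [slope_def_field, h0, sub_zero]
      rw [Set.mem_setOf_eq, hslope] at this
      have hyx : 0 < y - x₀ := sub_pos.mpr hy.1
      by_contra hgy
      push_neg at hgy
      exact absurd this (not_lt.mpr (div_nonpos_of_nonpos_of_nonneg hgy hyx.le))
  have hmid : (x₀ + b₁) / 2 ∈ Set.Icc x₀ b₁ := ⟨by linarith, by linarith⟩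
  have h1 : g x₀ < g ((x₀ + b₁) / 2) :=
    hmono (Set.left_mem_Icc.mpr hb₁.le) hmid (by linarith)
  exact absurd (hmax _ (hIccsub hmid)) (not_le.mpr h1)

/-- Parabolic maximum principle for `∂ₜV = lam ∂ₓₓV − μV` with Neumann boundary
conditions and nonpositive initial data: `V ≤ 0` on the whole cylinder. -/
lemma seirAux_max_principle (μ lam T L : ℝ) (hμ : 0 < μ) (hlam : 0 < lam)
    (hT : 0 < T) (hL : 0 < L) (V Vt Vx Vxx : ℝ → ℝ → ℝ)
    (hVcont : ContinuousOn (fun q : ℝ × ℝ => V q.1 q.2) (Set.Icc 0 T ×ˢ Set.Icc 0 L))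
    (hVt : ∀ t ∈ Set.Ioc 0 T, ∀ x ∈ Set.Ioo 0 L, HasDerivAt (fun τ => V τ x) (Vt t x) t)
    (hVx : ∀ t ∈ Set.Ioc 0 T, ∀ x ∈ Set.Icc 0 L,
      HasDerivWithinAt (fun y => V t y) (Vx t x) (Set.Icc 0 L) x)
    (hVxx : ∀ t ∈ Set.Ioc 0 T, ∀ x ∈ Set.Ioo 0 L, HasDerivAt (fun y => Vx t y) (Vxx t x) x)
    (hpde : ∀ t ∈ Set.Ioc 0 T, ∀ x ∈ Set.Ioo 0 L, Vt t x = lam * Vxx t x - μ * V t x)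
    (hbc : ∀ t ∈ Set.Ioc 0 T, Vx t 0 = 0 ∧ Vx t L = 0)
    (hinit : ∀ x ∈ Set.Icc 0 L, V 0 x ≤ 0) :
    ∀ t ∈ Set.Icc 0 T, ∀ x ∈ Set.Icc 0 L, V t x ≤ 0 := by
  intro t ht x hx
  have hC : 0 < L ^ 2 / 4 + 2 * lam / μ := by positivity
  have key : ∀ ε > 0, V t x ≤ ε * (L ^ 2 / 4 + 2 * lam / μ) := by
    intro ε hε
    set W : ℝ → ℝ → ℝ := fun s y => V s y - ε * (y - L / 2) ^ 2 with hWdef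
    have hKcomp : IsCompact (Set.Icc (0:ℝ) T ×ˢ Set.Icc (0:ℝ) L) :=
      isCompact_Icc.prod isCompact_Icc
    have hKne : (Set.Icc (0:ℝ) T ×ˢ Set.Icc (0:ℝ) L).Nonempty :=
      ⟨(0, 0), ⟨Set.left_mem_Icc.mpr hT.le, Set.left_mem_Icc.mpr hL.le⟩⟩
    have hWcont : ContinuousOn (fun q : ℝ × ℝ => W q.1 q.2)
        (Set.Icc 0 T ×ˢ Set.Icc 0 L) := by
      apply hVcont.sub
      exact (Continuous.continuousOn (by continuity))
    obtain ⟨q₀, hq₀K, hq₀max⟩ := hKcomp.exists_isMaxOn hKne hWcont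
    obtain ⟨t₀, x₀⟩ := q₀
    have ht₀ : t₀ ∈ Set.Icc 0 T := hq₀K.1
    have hx₀ : x₀ ∈ Set.Icc 0 L := hq₀K.2
    have hmaxW : ∀ s ∈ Set.Icc (0:ℝ) T, ∀ y ∈ Set.Icc (0:ℝ) L, W s y ≤ W t₀ x₀ :=
      fun s hs y hy => hq₀max (Set.mk_mem_prod hs hy)
    have hsq : ∀ y ∈ Set.Icc (0:ℝ) L, (y - L / 2) ^ 2 ≤ L ^ 2 / 4 := by
      intro y hy
      nlinarith [hy.1, hy.2]
    rcases eq_or_lt_of_le ht₀.1 with h0t | h0t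
    · -- maximum at t₀ = 0 : everything is ≤ initial data
      have h2 : V t₀ x₀ - ε * (x₀ - L / 2) ^ 2 ≤ 0 := by
        rw [← h0t]
        nlinarith [hinit x₀ hx₀, sq_nonneg (x₀ - L / 2)]
      have h1 : V t x - ε * (x - L / 2) ^ 2 ≤ V t₀ x₀ - ε * (x₀ - L / 2) ^ 2 :=
        hmaxW t ht x hx
      have h4 : ε * (x - L / 2) ^ 2 ≤ ε * (L ^ 2 / 4) :=
        mul_le_mul_of_nonneg_left (hsq x hx) hε.le
      have h5 : 0 ≤ ε * (2 * lam / μ) := by positivity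
      have h6 : ε * (L ^ 2 / 4) + ε * (2 * lam / μ) = ε * (L ^ 2 / 4 + 2 * lam / μ) := by
        ring
      linarith
    · -- maximum at t₀ > 0
      have ht₀' : t₀ ∈ Set.Ioc 0 T := ⟨h0t, ht₀.2⟩
      -- spatial derivative of W at time t₀
      have hWx : ∀ y ∈ Set.Icc (0:ℝ) L,
          HasDerivWithinAt (fun z => W t₀ z) (Vx t₀ y - ε * (2 * (y - L / 2)))
            (Set.Icc 0 L) y := by
        intro y hy
        have h1 : HasDerivAt (fun z : ℝ => ε * (z - L / 2) ^ 2) (ε * (2 * (y - L / 2))) y := by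
          have := (((hasDerivAt_id y).sub_const (L / 2)).pow 2).const_mul ε
          refine this.congr_deriv ?_
          simp only [id_eq]
          ring
        exact (hVx t₀ ht₀' y hy).sub h1.hasDerivWithinAt
      have hgmax : ∀ y ∈ Set.Icc (0:ℝ) L, W t₀ y ≤ W t₀ x₀ := fun y hy => hmaxW t₀ ht₀ y hy
      -- x₀ is not a boundary point
      have hx₀0 : x₀ ≠ 0 := by
        intro h
        have hd := seirAux_deriv_nonpos_left hL (h ▸ hWx x₀ hx₀) (h ▸ hgmax)
        rw [(hbc t₀ ht₀').1] at hd
        nlinarith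
      have hx₀L : x₀ ≠ L := by
        intro h
        have hd := seirAux_deriv_nonneg_right hL (h ▸ hWx x₀ hx₀) (h ▸ hgmax)
        rw [(hbc t₀ ht₀').2] at hd
        nlinarith
      have hx₀I : x₀ ∈ Set.Ioo 0 L :=
        ⟨lt_of_le_of_ne hx₀.1 (Ne.symm hx₀0), lt_of_le_of_ne hx₀.2 hx₀L⟩
      -- first spatial derivative vanishes at the interior maximum
      have hWx₀ : Vx t₀ x₀ - ε * (2 * (x₀ - L / 2)) = 0 := by
        have hloc : IsLocalMax (fun z => W t₀ z) x₀ := by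
          filter_upwards [Icc_mem_nhds hx₀I.1 hx₀I.2] with y hy
          exact hgmax y hy
        exact hloc.hasDerivAt_eq_zero
          ((hWx x₀ hx₀).hasDerivAt (Icc_mem_nhds hx₀I.1 hx₀I.2))
      -- second spatial derivative test
      have hWxx : Vxx t₀ x₀ - 2 * ε ≤ 0 := by
        refine seirAux_second_deriv_nonpos (g := fun z => W t₀ z)
          (g' := fun z => Vx t₀ z - ε * (2 * (z - L / 2))) hx₀I.2
          (fun y hy => ?_) hWx₀ ?_ (fun y hy => hgmax y ⟨le_trans hx₀.1 hy.1, hy.2⟩)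
        · exact (hWx y ⟨le_trans hx₀.1 hy.1, hy.2⟩).mono
            (Set.Icc_subset_Icc hx₀.1 le_rfl)
        · have h2 : HasDerivAt (fun z : ℝ => ε * (2 * (z - L / 2))) (2 * ε) x₀ := by
            have := (((hasDerivAt_id x₀).sub_const (L / 2)).const_mul 2).const_mul ε
            refine this.congr_deriv ?_
            ring
          exact (hVxx t₀ ht₀' x₀ hx₀I).sub h2
      -- time derivative is nonnegative at the maximum
      have hVt₀ : 0 ≤ Vt t₀ x₀ := by
        have hft : HasDerivWithinAt (fun τ => W τ x₀) (Vt t₀ x₀) (Set.Icc 0 t₀) t₀ := by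
          have : HasDerivAt (fun τ => V τ x₀ - ε * (x₀ - L / 2) ^ 2) (Vt t₀ x₀) t₀ :=
            (hVt t₀ ht₀' x₀ hx₀I).sub_const _
          exact this.hasDerivWithinAt
        exact seirAux_deriv_nonneg_right h0t hft
          (fun s hs => hmaxW s ⟨hs.1, le_trans hs.2 ht₀.2⟩ x₀ hx₀)
      -- combine with the PDE
      have hpde₀ := hpde t₀ ht₀' x₀ hx₀I
      have hV₀ : μ * V t₀ x₀ ≤ 2 * lam * ε := by nlinarith
      -- conclude
      have h1 : V t x - ε * (x - L / 2) ^ 2 ≤ V t₀ x₀ - ε * (x₀ - L / 2) ^ 2 :=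
        hmaxW t ht x hx
      have h3 : V t₀ x₀ ≤ 2 * lam * ε / μ := by
        rw [le_div_iff₀ hμ]
        nlinarith
      have h4 : ε * (x - L / 2) ^ 2 ≤ ε * (L ^ 2 / 4) :=
        mul_le_mul_of_nonneg_left (hsq x hx) hε.le
      have h5 : 0 ≤ ε * (x₀ - L / 2) ^ 2 := by positivity
      have h6 : 2 * lam * ε / μ + ε * (L ^ 2 / 4) = ε * (L ^ 2 / 4 + 2 * lam / μ) := by
        ring
      linarith
  by_contra hpos
  push_neg at hpos
  have hε : 0 < V t x / (2 * (L ^ 2 / 4 + 2 * lam / μ)) := by positivity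
  have := key _ hε
  rw [div_mul_eq_mul_div, le_div_iff₀ (by positivity)] at this
  nlinarith


/-- For a classical solution of the 1D SEIR reaction–diffusion system,
with `D = max 0 (max_y N(0,y) − Λ/μ)`, the total population satisfies
`N(t,x) ≤ Λ/μ + D·e^{−μt}` on `[0,T]×[0,L]`: the excess above the carrying capacity
`Λ/μ` decays at least at the exponential rate `μ`. -/
theorem seir_classical_solution_exponential_decay_of_excess
    (Λ μ β p δ η γ lam T L : ℝ)
    (hΛ : 0 ≤ Λ) (hμ : 0 < μ) (hβ : 0 ≤ β) (hp0 : 0 ≤ p) (hp1 : p ≤ 1)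
    (hδ : 0 ≤ δ) (hη : 0 ≤ η) (hγ : 0 ≤ γ) (hlam : 0 < lam)
    (hT : 0 < T) (hL : 0 < L)
    (S E I R : ℝ → ℝ → ℝ)
    -- partial derivatives: in time (·t), first (·x) and second (·xx) in space
    (St Et It Rt Sx Ex Ix Rx Sxx Exx Ixx Rxx : ℝ → ℝ → ℝ)
    -- continuity on the closed space-time cylinder [0,T] × [0,L]
    (hScont : ContinuousOn (fun q : ℝ × ℝ => S q.1 q.2) (Set.Icc 0 T ×ˢ Set.Icc 0 L))
    (hEcont : ContinuousOn (fun q : ℝ × ℝ => E q.1 q.2) (Set.Icc 0 T ×ˢ Set.Icc 0 L))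
    (hIcont : ContinuousOn (fun q : ℝ × ℝ => I q.1 q.2) (Set.Icc 0 T ×ˢ Set.Icc 0 L))
    (hRcont : ContinuousOn (fun q : ℝ × ℝ => R q.1 q.2) (Set.Icc 0 T ×ˢ Set.Icc 0 L))
    -- time partial derivatives on (0,T] × (0,L)
    (hSt : ∀ t ∈ Set.Ioc 0 T, ∀ x ∈ Set.Ioo 0 L, HasDerivAt (fun τ => S τ x) (St t x) t)
    (hEt : ∀ t ∈ Set.Ioc 0 T, ∀ x ∈ Set.Ioo 0 L, HasDerivAt (fun τ => E τ x) (Et t x) t)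
    (hIt : ∀ t ∈ Set.Ioc 0 T, ∀ x ∈ Set.Ioo 0 L, HasDerivAt (fun τ => I τ x) (It t x) t)
    (hRt : ∀ t ∈ Set.Ioc 0 T, ∀ x ∈ Set.Ioo 0 L, HasDerivAt (fun τ => R τ x) (Rt t x) t)
    -- first spatial partial derivatives on (0,T] × [0,L] (one-sided at the endpoints)
    (hSx : ∀ t ∈ Set.Ioc 0 T, ∀ x ∈ Set.Icc 0 L,
      HasDerivWithinAt (fun y => S t y) (Sx t x) (Set.Icc 0 L) x)
    (hEx : ∀ t ∈ Set.Ioc 0 T, ∀ x ∈ Set.Icc 0 L,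
      HasDerivWithinAt (fun y => E t y) (Ex t x) (Set.Icc 0 L) x)
    (hIx : ∀ t ∈ Set.Ioc 0 T, ∀ x ∈ Set.Icc 0 L,
      HasDerivWithinAt (fun y => I t y) (Ix t x) (Set.Icc 0 L) x)
    (hRx : ∀ t ∈ Set.Ioc 0 T, ∀ x ∈ Set.Icc 0 L,
      HasDerivWithinAt (fun y => R t y) (Rx t x) (Set.Icc 0 L) x)
    -- second spatial partial derivatives on (0,T] × (0,L)
    (hSxx : ∀ t ∈ Set.Ioc 0 T, ∀ x ∈ Set.Ioo 0 L, HasDerivAt (fun y => Sx t y) (Sxx t x) x)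
    (hExx : ∀ t ∈ Set.Ioc 0 T, ∀ x ∈ Set.Ioo 0 L, HasDerivAt (fun y => Ex t y) (Exx t x) x)
    (hIxx : ∀ t ∈ Set.Ioc 0 T, ∀ x ∈ Set.Ioo 0 L, HasDerivAt (fun y => Ix t y) (Ixx t x) x)
    (hRxx : ∀ t ∈ Set.Ioc 0 T, ∀ x ∈ Set.Ioo 0 L, HasDerivAt (fun y => Rx t y) (Rxx t x) x)
    -- the SEIR reaction–diffusion equations on (0,T] × (0,L)
    (heqS : ∀ t ∈ Set.Ioc 0 T, ∀ x ∈ Set.Ioo 0 L,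
      St t x = lam * Sxx t x + Λ - β * S t x * I t x - μ * S t x)
    (heqE : ∀ t ∈ Set.Ioc 0 T, ∀ x ∈ Set.Ioo 0 L,
      Et t x = lam * Exx t x + β * p * S t x * I t x - (δ + η + μ) * E t x)
    (heqI : ∀ t ∈ Set.Ioc 0 T, ∀ x ∈ Set.Ioo 0 L,
      It t x = lam * Ixx t x + β * (1 - p) * S t x * I t x + δ * E t x - (γ + μ) * I t x)
    (heqR : ∀ t ∈ Set.Ioc 0 T, ∀ x ∈ Set.Ioo 0 L,
      Rt t x = lam * Rxx t x + η * E t x + γ * I t x - μ * R t x)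
    -- homogeneous Neumann boundary conditions
    (hbcS : ∀ t ∈ Set.Ioc 0 T, Sx t 0 = 0 ∧ Sx t L = 0)
    (hbcE : ∀ t ∈ Set.Ioc 0 T, Ex t 0 = 0 ∧ Ex t L = 0)
    (hbcI : ∀ t ∈ Set.Ioc 0 T, Ix t 0 = 0 ∧ Ix t L = 0)
    (hbcR : ∀ t ∈ Set.Ioc 0 T, Rx t 0 = 0 ∧ Rx t L = 0) :
    ∀ t ∈ Set.Icc 0 T, ∀ x ∈ Set.Icc 0 L,
      S t x + E t x + I t x + R t x ≤
        Λ / μ +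
          max 0 (sSup ((fun y => S 0 y + E 0 y + I 0 y + R 0 y) '' Set.Icc 0 L) - Λ / μ)
            * Real.exp (-μ * t) := by
  set D : ℝ := max 0 (sSup ((fun y => S 0 y + E 0 y + I 0 y + R 0 y) '' Set.Icc 0 L) - Λ / μ)
    with hDdef
  have hmp := seirAux_max_principle μ lam T L hμ hlam hT hL
    (fun t x => S t x + E t x + I t x + R t x - Λ / μ - D * Real.exp (-μ * t))
    (fun t x => St t x + Et t x + It t x + Rt t x + μ * D * Real.exp (-μ * t))
    (fun t x => Sx t x + Ex t x + Ix t x + Rx t x)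
    (fun t x => Sxx t x + Exx t x + Ixx t x + Rxx t x)
    ?cont ?dt ?dx ?dxx ?pde ?bc ?init
  case cont =>
    have h1 : ContinuousOn (fun q : ℝ × ℝ => S q.1 q.2 + E q.1 q.2 + I q.1 q.2 + R q.1 q.2)
        (Set.Icc 0 T ×ˢ Set.Icc 0 L) := ((hScont.add hEcont).add hIcont).add hRcont
    have h2 : Continuous (fun q : ℝ × ℝ => D * Real.exp (-μ * q.1)) :=
      continuous_const.mul (Real.continuous_exp.comp (continuous_const.mul continuous_fst))
    exact (h1.sub continuousOn_const).sub h2.continuousOn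
  case dt =>
    intro t ht x hx
    have hexp : HasDerivAt (fun τ : ℝ => D * Real.exp (-μ * τ))
        (D * (Real.exp (-μ * t) * -μ)) t := by
      have h1 : HasDerivAt (fun τ : ℝ => -μ * τ) (-μ) t := by
        simpa using (hasDerivAt_id t).const_mul (-μ)
      simpa using h1.exp.const_mul D
    have hNt := (((hSt t ht x hx).add (hEt t ht x hx)).add (hIt t ht x hx)).add (hRt t ht x hx)
    have := (hNt.sub_const (Λ / μ)).sub hexp
    refine this.congr_deriv ?_
    ring
  case dx =>
    intro t ht x hx
    have hNx := (((hSx t ht x hx).add (hEx t ht x hx)).add (hIx t ht x hx)).add (hRx t ht x hx)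
    exact (hNx.sub_const (Λ / μ)).sub_const (D * Real.exp (-μ * t))
  case dxx =>
    intro t ht x hx
    exact (((hSxx t ht x hx).add (hExx t ht x hx)).add (hIxx t ht x hx)).add (hRxx t ht x hx)
  case pde =>
    intro t ht x hx
    rw [heqS t ht x hx, heqE t ht x hx, heqI t ht x hx, heqR t ht x hx]
    field_simp
    ring
  case bc =>
    intro t ht
    constructor
    · show Sx t 0 + Ex t 0 + Ix t 0 + Rx t 0 = 0
      rw [(hbcS t ht).1, (hbcE t ht).1, (hbcI t ht).1, (hbcR t ht).1]
      ring
    · show Sx t L + Ex t L + Ix t L + Rx t L = 0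
      rw [(hbcS t ht).2, (hbcE t ht).2, (hbcI t ht).2, (hbcR t ht).2]
      ring
  case init =>
    intro x hx
    have hNcont : ContinuousOn (fun y => S 0 y + E 0 y + I 0 y + R 0 y) (Set.Icc 0 L) := by
      have hmap : ContinuousOn (fun y : ℝ => ((0 : ℝ), y)) (Set.Icc 0 L) :=
        (continuous_const.prodMk continuous_id).continuousOn
      have hmem : Set.MapsTo (fun y : ℝ => ((0 : ℝ), y)) (Set.Icc 0 L)
          (Set.Icc 0 T ×ˢ Set.Icc 0 L) :=
        fun y hy => ⟨Set.left_mem_Icc.mpr hT.le, hy⟩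
      exact ((((hScont.comp hmap hmem).add (hEcont.comp hmap hmem)).add
        (hIcont.comp hmap hmem)).add (hRcont.comp hmap hmem))
    have hbdd : BddAbove ((fun y => S 0 y + E 0 y + I 0 y + R 0 y) '' Set.Icc 0 L) :=
      (isCompact_Icc.image_of_continuousOn hNcont).bddAbove
    have hle : S 0 x + E 0 x + I 0 x + R 0 x ≤
        sSup ((fun y => S 0 y + E 0 y + I 0 y + R 0 y) '' Set.Icc 0 L) :=
      le_csSup hbdd ⟨x, hx, rfl⟩
    have hD : sSup ((fun y => S 0 y + E 0 y + I 0 y + R 0 y) '' Set.Icc 0 L) - Λ / μ ≤ D :=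
      le_max_right _ _
    have hexp0 : Real.exp (-μ * 0) = 1 := by norm_num
    show S 0 x + E 0 x + I 0 x + R 0 x - Λ / μ - D * Real.exp (-μ * 0) ≤ 0
    rw [hexp0]
    linarith
  intro t ht x hx
  have h := hmp t ht x hx
  have h' : S t x + E t x + I t x + R t x - Λ / μ - D * Real.exp (-μ * t) ≤ 0 := h
  linarith
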